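/- Let p > 2, w(s) := (cosh s)^{−2/(p−2)} and χ := w^{p/2}, i.e. χ(s) = (cosh s)^{−p/(p−2)}. Then ∫_ℝ |χ'(s)|² ds − (2p(p−1)/(p−2)²)·∫_ℝ w(s)^{2(p−1)} ds = −(p/(p−2))²·∫_ℝ w(s)^{p} ds, all integrals being finite. -/

import Mathlib

open MeasureTheory Real Filter Set Topology

lemma half_exp_le_cosh (x : ℝ) : Real.exp x / 2 ≤ Real.cosh x := by
  rw [Real.cosh_eq]
  have := (Real.exp_pos (-x)).le
  linarith

lemma sinh_abs_le_cosh (x : ℝ) : |Real.sinh x| ≤ Real.cosh x := by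
  rw [Real.abs_sinh, ← Real.cosh_abs x, Real.sinh_eq, Real.cosh_eq]
  have := (Real.exp_pos (-|x|)).le
  linarith

lemma tendsto_cosh_atTop : Tendsto Real.cosh atTop atTop :=
  tendsto_atTop_mono half_exp_le_cosh (Real.tendsto_exp_atTop.atTop_div_const two_pos)

lemma tendsto_cosh_atBot : Tendsto Real.cosh atBot atTop := by
  have h : Real.cosh = fun x : ℝ => Real.cosh (-x) := by
    funext x; rw [Real.cosh_neg]
  rw [h]
  exact tendsto_cosh_atTop.comp tendsto_neg_atBot_atTop

lemma cosh_mul_rpow (b s : ℝ) :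
    Real.cosh s * Real.cosh s ^ (-(b + 1)) = Real.cosh s ^ (-b) := by
  nth_rewrite 1 [← Real.rpow_one (Real.cosh s)]
  rw [← Real.rpow_add (Real.cosh_pos s)]
  norm_num

lemma integrable_cosh_rpow {b : ℝ} (hb : 0 < b) :
    Integrable (fun s : ℝ => Real.cosh s ^ (-b)) := by
  have hc : Continuous (fun s : ℝ => Real.cosh s ^ (-b)) :=
    Real.continuous_cosh.rpow_const (fun x => Or.inl (Real.cosh_pos x).ne')
  refine (hc.locallyIntegrable).integrable_of_isBigO_atTop_of_norm_isNegInvariant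
    ?_ (g := fun x : ℝ => Real.exp (-b * x)) ?_ ?_
  · filter_upwards with x
    simp [Function.comp, Real.cosh_neg]
  · refine Asymptotics.IsBigO.of_bound (2 ^ b) (Eventually.of_forall fun x => ?_)
    rw [Real.norm_eq_abs, Real.norm_eq_abs,
      abs_of_nonneg (Real.rpow_nonneg (Real.cosh_pos x).le _),
      abs_of_nonneg (Real.exp_pos _).le]
    calc Real.cosh x ^ (-b) ≤ (Real.exp x / 2) ^ (-b) :=
          Real.rpow_le_rpow_of_nonpos (by positivity) (half_exp_le_cosh x)
            (neg_nonpos.mpr hb.le)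
      _ = 2 ^ b * Real.exp (-b * x) := by
          rw [Real.div_rpow (Real.exp_pos x).le (by norm_num : (0:ℝ) ≤ 2),
            ← Real.exp_mul, Real.rpow_neg (by norm_num : (0:ℝ) ≤ 2), div_inv_eq_mul,
            mul_comm x (-b)]
          ring
  · exact ⟨Ioi 0, Ioi_mem_atTop 0, exp_neg_integrableOn_Ioi 0 hb⟩

lemma hasDerivAt_cosh_rpow (c s : ℝ) :
    HasDerivAt (fun x : ℝ => Real.cosh x ^ c)
      (c * Real.sinh s * Real.cosh s ^ (c - 1)) s := by
  have h := (Real.hasDerivAt_cosh s).rpow_const (p := c) (Or.inl (Real.cosh_pos s).ne')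
  convert h using 1
  ring

lemma cosh_rpow_recursion {b : ℝ} (hb : 0 < b) :
    (b + 1) * ∫ s : ℝ, Real.cosh s ^ (-(b + 2)) = b * ∫ s : ℝ, Real.cosh s ^ (-b) := by
  set F : ℝ → ℝ := fun s => Real.sinh s * Real.cosh s ^ (-(b + 1)) with hF
  set G : ℝ → ℝ := fun s => (b + 1) * Real.cosh s ^ (-(b + 2)) - b * Real.cosh s ^ (-b) with hG
  have hint2 : Integrable (fun s : ℝ => Real.cosh s ^ (-(b + 2))) :=
    integrable_cosh_rpow (by linarith)
  have hint1 : Integrable (fun s : ℝ => Real.cosh s ^ (-b)) := integrable_cosh_rpow hb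
  have hGint : Integrable G := (hint2.const_mul (b + 1)).sub (hint1.const_mul b)
  have hder : ∀ s : ℝ, HasDerivAt F (G s) s := by
    intro s
    have h2 := hasDerivAt_cosh_rpow (-(b + 1)) s
    have h : HasDerivAt (fun x : ℝ => Real.sinh x * Real.cosh x ^ (-(b + 1)))
        (Real.cosh s * Real.cosh s ^ (-(b + 1)) + Real.sinh s * (-(b + 1) * Real.sinh s * Real.cosh s ^ (-(b + 1) - 1))) s :=
      (Real.hasDerivAt_sinh s).mul h2
    convert h using 1
    have hc := Real.cosh_pos s
    have e1 : Real.cosh s * Real.cosh s ^ (-(b + 1)) = Real.cosh s ^ (-b) :=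
      cosh_mul_rpow b s
    have e0 : -(b + 1) - 1 = -(b + 2) := by ring
    have e3 : Real.cosh s ^ 2 * Real.cosh s ^ (-(b + 2)) = Real.cosh s ^ (-b) := by
      rw [← Real.rpow_natCast (Real.cosh s) 2, ← Real.rpow_add hc]
      norm_num
    have e4 : Real.sinh s * (-(b + 1) * Real.sinh s * Real.cosh s ^ (-(b + 1) - 1))
        = -(b + 1) * (Real.sinh s ^ 2 * Real.cosh s ^ (-(b + 2))) := by
      rw [e0]; ring
    rw [e4, Real.sinh_sq, e1]
    simp only [hG]
    linear_combination (b + 1) * e3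
  have hbound : ∀ s : ℝ, ‖F s‖ ≤ Real.cosh s ^ (-b) := by
    intro s
    have h1 : ‖F s‖ = |Real.sinh s| * Real.cosh s ^ (-(b + 1)) := by
      rw [hF]
      rw [norm_mul, Real.norm_eq_abs, Real.norm_eq_abs,
        abs_of_nonneg (Real.rpow_nonneg (Real.cosh_pos s).le _)]
    rw [h1, ← cosh_mul_rpow b s]
    exact mul_le_mul_of_nonneg_right (sinh_abs_le_cosh s)
      (Real.rpow_nonneg (Real.cosh_pos s).le _)
  have htop : Tendsto F atTop (𝓝 0) :=
    squeeze_zero_norm hbound ((tendsto_rpow_neg_atTop hb).comp tendsto_cosh_atTop)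
  have hbot : Tendsto F atBot (𝓝 0) :=
    squeeze_zero_norm hbound ((tendsto_rpow_neg_atTop hb).comp tendsto_cosh_atBot)
  have hF0 : F 0 = 0 := by simp [hF]
  have hIoi : ∫ s in Ioi (0:ℝ), G s = 0 - F 0 :=
    integral_Ioi_of_hasDerivAt_of_tendsto' (fun x _ => hder x) hGint.integrableOn htop
  have hIic : ∫ s in Iic (0:ℝ), G s = F 0 - 0 :=
    integral_Iic_of_hasDerivAt_of_tendsto' (fun x _ => hder x) hGint.integrableOn hbot
  have hzero : ∫ s : ℝ, G s = 0 := by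
    rw [← intervalIntegral.integral_Iic_add_Ioi hGint.integrableOn hGint.integrableOn, hIoi, hIic, hF0]
    ring
  have := hzero
  rw [hG] at this
  rw [integral_sub (hint2.const_mul (b + 1)) (hint1.const_mul b),
    integral_const_mul, integral_const_mul, sub_eq_zero] at this
  exact this

/-- `w(s) = (cosh s)^{-2/(p-2)}` -/
noncomputable def wOpt (p : ℝ) : ℝ → ℝ := fun s => Real.cosh s ^ (-(2 / (p - 2)))

/-- `χ(s) = w(s)^{p/2} = (cosh s)^{-p/(p-2)}` -/
noncomputable def chiOpt (p : ℝ) : ℝ → ℝ := fun s => Real.cosh s ^ (-(p / (p - 2)))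

/-- The integral identity
`∫ |χ'|² - (2p(p-1)/(p-2)²) ∫ w^{2(p-1)} = -(p/(p-2))² ∫ w^p`,
all integrals being finite. -/
theorem chi_integral_identity (p : ℝ) (hp : 2 < p) :
    Integrable (fun s : ℝ => (deriv (chiOpt p) s) ^ 2) ∧
    Integrable (fun s : ℝ => wOpt p s ^ (2 * (p - 1))) ∧
    Integrable (fun s : ℝ => wOpt p s ^ p) ∧
    (∫ s : ℝ, (deriv (chiOpt p) s) ^ 2) -
        2 * p * (p - 1) / (p - 2) ^ 2 * (∫ s : ℝ, wOpt p s ^ (2 * (p - 1))) =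
      -((p / (p - 2)) ^ 2) * ∫ s : ℝ, wOpt p s ^ p := by
  have hp2 : (0:ℝ) < p - 2 := by linarith
  have hp2' : p - 2 ≠ 0 := hp2.ne'
  set c : ℝ := p / (p - 2) with hc
  have hcpos : 0 < c := div_pos (by linarith) hp2
  -- pointwise identities
  have eW : (fun s : ℝ => wOpt p s ^ p) = fun s : ℝ => Real.cosh s ^ (-(2 * c)) := by
    funext s
    rw [wOpt, ← Real.rpow_mul (Real.cosh_pos s).le]
    congr 1
    rw [hc]
    field_simp
    try ring
  have eW2 : (fun s : ℝ => wOpt p s ^ (2 * (p - 1)))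
      = fun s : ℝ => Real.cosh s ^ (-(2 * c + 2)) := by
    funext s
    rw [wOpt, ← Real.rpow_mul (Real.cosh_pos s).le]
    congr 1
    rw [hc]
    field_simp
    try ring
  have eD : (fun s : ℝ => (deriv (chiOpt p) s) ^ 2)
      = fun s : ℝ => c ^ 2 * Real.cosh s ^ (-(2 * c))
          - c ^ 2 * Real.cosh s ^ (-(2 * c + 2)) := by
    funext s
    have hchi : chiOpt p = fun x : ℝ => Real.cosh x ^ (-c) := rfl
    have hd : deriv (chiOpt p) s = -c * Real.sinh s * Real.cosh s ^ (-c - 1) := by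
      rw [hchi]
      exact (hasDerivAt_cosh_rpow (-c) s).deriv
    rw [hd]
    have hcs := Real.cosh_pos s
    have eX : (Real.cosh s ^ (-c - 1)) ^ 2 = Real.cosh s ^ (-(2 * c + 2)) := by
      rw [← Real.rpow_natCast (Real.cosh s ^ (-c - 1)) 2,
        ← Real.rpow_mul hcs.le]
      congr 1
      push_cast
      ring
    have e3 : Real.cosh s ^ 2 * Real.cosh s ^ (-(2 * c + 2))
        = Real.cosh s ^ (-(2 * c)) := by
      rw [← Real.rpow_natCast (Real.cosh s) 2, ← Real.rpow_add hcs]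
      congr 1
      push_cast
      ring
    have : (-c * Real.sinh s * Real.cosh s ^ (-c - 1)) ^ 2
        = c ^ 2 * Real.sinh s ^ 2 * (Real.cosh s ^ (-c - 1)) ^ 2 := by ring
    rw [this, eX, Real.sinh_sq]
    linear_combination c ^ 2 * e3
  have hI1 : Integrable (fun s : ℝ => Real.cosh s ^ (-(2 * c))) :=
    integrable_cosh_rpow (by linarith)
  have hI2 : Integrable (fun s : ℝ => Real.cosh s ^ (-(2 * c + 2))) :=
    integrable_cosh_rpow (by linarith)
  have hrec := cosh_rpow_recursion (b := 2 * c) (by linarith)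
  refine ⟨?_, ?_, ?_, ?_⟩
  · rw [eD]
    exact (hI1.const_mul _).sub (hI2.const_mul _)
  · rw [eW2]; exact hI2
  · rw [eW]; exact hI1
  · rw [eD, eW, eW2,
      integral_sub (hI1.const_mul _) (hI2.const_mul _),
      integral_const_mul, integral_const_mul]
    set I1 := ∫ s : ℝ, Real.cosh s ^ (-(2 * c))
    set I2 := ∫ s : ℝ, Real.cosh s ^ (-(2 * c + 2))
    rw [hc] at hrec ⊢
    field_simp at hrec ⊢
    linear_combination (-1) * hrec
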